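/- arXiv:0708.4409 — 2 statements merged into one kernel-verified Lean document; each statement's English description precedes it below -/
import Mathlib

section
/- Let A be a finite alphabet with a total order <, let z ∈ A, and let w, w' be finite words with w' nonempty such that w = ψ_z(w')z (so w ends with the letter z). Then: if min(w) begins with z, min(w) = ψ_z(min(w'))z; otherwise, min(w) = z^{-1}ψ_z(min(w'))z, i.e., min(w) is obtained from ψ_z(min(w'))z by deleting its first letter z. -/
/-- The prefix of length `k` of an infinite word `t`. -/
def prefixList {A : Type*} (t : ℕ → A) (k : ℕ) : List A := (List.range k).map t

/-- `u` occurs as a factor of the infinite word `t` at position `i`. -/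
def FactorAt {A : Type*} (t : ℕ → A) (u : List A) (i : ℕ) : Prop :=
  u = (List.range u.length).map (fun j => t (i + j))

/-- `u` is a (finite) factor of the infinite word `t`. -/
def IsFactorInf {A : Type*} (t : ℕ → A) (u : List A) : Prop := ∃ i, FactorAt t u i

/-- An infinite word is recurrent if each of its factors occurs infinitely often. -/
def Recurrent {A : Type*} (t : ℕ → A) : Prop :=
  ∀ u, IsFactorInf t u → ∀ N, ∃ i, N ≤ i ∧ FactorAt t u i

/-- `u` is a right special factor of `t`. -/
def RightSpecial {A : Type*} (t : ℕ → A) (u : List A) : Prop :=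
  ∃ a b : A, a ≠ b ∧ IsFactorInf t (u ++ [a]) ∧ IsFactorInf t (u ++ [b])

/-- `u` is a left special factor of `t`. -/
def LeftSpecial {A : Type*} (t : ℕ → A) (u : List A) : Prop :=
  ∃ a b : A, a ≠ b ∧ IsFactorInf t (a :: u) ∧ IsFactorInf t (b :: u)

/-- An infinite word is episturmian if its set of factors is closed under reversal
and it has at most one right special factor of each length. -/
def Episturmian {A : Type*} (t : ℕ → A) : Prop :=
  (∀ u, IsFactorInf t u → IsFactorInf t u.reverse) ∧
  (∀ u v, RightSpecial t u → RightSpecial t v → u.length = v.length → u = v)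

/-- A standard episturmian word: episturmian with all left special factors prefixes. -/
def StdEpisturmian {A : Type*} (t : ℕ → A) : Prop :=
  Episturmian t ∧ ∀ u, LeftSpecial t u → u = prefixList t u.length

/-- A finite word is finite episturmian if it is a factor of some episturmian infinite word. -/
def FiniteEpisturmian {A : Type*} (w : List A) : Prop :=
  ∃ t : ℕ → A, Episturmian t ∧ IsFactorInf t w

/-- An acceptable pair: a strict total order `r` on `A` together with a letter `a`
that is minimal for `r`. -/
def AcceptablePair {A : Type*} (r : A → A → Prop) (a : A) : Prop :=
  IsStrictTotalOrder A r ∧ ∀ b, b ≠ a → r a b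

/-- Non-strict lexicographic order on finite words induced by the order `r` on letters. -/
def listLe {A : Type*} (r : A → A → Prop) (u v : List A) : Prop := u = v ∨ List.Lex r u v

/-- Non-strict lexicographic order on infinite words induced by the order `r` on letters. -/
def infLe {A : Type*} (r : A → A → Prop) (x y : ℕ → A) : Prop :=
  x = y ∨ ∃ i, (∀ j, j < i → x j = y j) ∧ r (x i) (y i)

/-- `m` is the lexicographically smallest factor of the finite word `w` of length `k`. -/
def IsMinFacLen {A : Type*} (r : A → A → Prop) (w : List A) (k : ℕ) (m : List A) : Prop :=
  m <:+: w ∧ m.length = k ∧ ∀ u, u <:+: w → u.length = k → listLe r m u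

/-- `m` is the lexicographically greatest factor of the finite word `w` of length `k`. -/
def IsMaxFacLen {A : Type*} (r : A → A → Prop) (w : List A) (k : ℕ) (m : List A) : Prop :=
  m <:+: w ∧ m.length = k ∧ ∀ u, u <:+: w → u.length = k → listLe r u m

/-- `m = min(w)`: for each `j ≤ |m|` the prefix of `m` of length `j` is `min(w|j)`,
and `|m|` is maximal with this chain property. -/
def IsMinFin {A : Type*} (r : A → A → Prop) (w m : List A) : Prop :=
  m ≠ [] ∧
  (∀ j, j ≤ m.length → IsMinFacLen r w j (m.take j)) ∧
  (∀ m', IsMinFacLen r w (m.length + 1) m' → ¬ m <+: m')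

/-- `m = max(w)` (finite word version). -/
def IsMaxFin {A : Type*} (r : A → A → Prop) (w m : List A) : Prop :=
  m ≠ [] ∧
  (∀ j, j ≤ m.length → IsMaxFacLen r w j (m.take j)) ∧
  (∀ m', IsMaxFacLen r w (m.length + 1) m' → ¬ m <+: m')

/-- `m = min(t)` for an infinite word `t`: each prefix of `m` is the lexicographically
smallest factor of `t` of its length. -/
def IsMinInf {A : Type*} (r : A → A → Prop) (t m : ℕ → A) : Prop :=
  ∀ k, IsFactorInf t (prefixList m k) ∧
    ∀ u, IsFactorInf t u → u.length = k → listLe r (prefixList m k) u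

/-- `m = max(t)` for an infinite word `t`. -/
def IsMaxInf {A : Type*} (r : A → A → Prop) (t m : ℕ → A) : Prop :=
  ∀ k, IsFactorInf t (prefixList m k) ∧
    ∀ u, IsFactorInf t u → u.length = k → listLe r u (prefixList m k)

/-- Prepend a letter to an infinite word. -/
def consInf {A : Type*} (a : A) (t : ℕ → A) : ℕ → A
  | 0 => a
  | n + 1 => t n

/-- Prepend a finite word to an infinite word. -/
def wordAppend {A : Type*} (v : List A) (t : ℕ → A) : ℕ → A :=
  fun n => if h : n < v.length then v.get ⟨n, h⟩ else t (n - v.length)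

/-- The pure epistandard morphism `ψ_z` on finite words: it fixes `z` and sends
each letter `x ≠ z` to `zx`. -/
def psiW {A : Type*} [DecidableEq A] (z : A) (w : List A) : List A :=
  (w.map (fun x => if x = z then [z] else [z, x])).flatten

/-- The finite word `u` is a prefix of the infinite word `t`. -/
def IsPrefixInf {A : Type*} (u : List A) (t : ℕ → A) : Prop := u = prefixList t u.length

/-- `y = f(t)`: the infinite word `y` is the image of the infinite word `t` under the
(non-erasing) morphism `f`, acting letter by letter. -/
def IsMorphImage {A : Type*} (f : List A → List A) (t y : ℕ → A) : Prop :=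
  ∀ k, IsPrefixInf (f (prefixList t k)) y

/-- Pure epistandard morphisms: finite compositions of the morphisms `ψ_a`. -/
inductive PureEpistandard {A : Type*} [DecidableEq A] : (List A → List A) → Prop
  | id : PureEpistandard _root_.id
  | comp (a : A) (f : List A → List A) : PureEpistandard f →
      PureEpistandard (fun w => psiW a (f w))

/-- An infinite word is episkew if it is non-recurrent and all of its factors
are finite episturmian. -/
def Episkew {A : Type*} (t : ℕ → A) : Prop :=
  ¬ Recurrent t ∧ ∀ u, IsFactorInf t u → FiniteEpisturmian u

/- Two-letter (Bool) notions: `false` plays the role of `a`, `true` of `b`,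
with the order `false < true`. -/

/-- A finite binary word is balanced. -/
def BalancedList (w : List Bool) : Prop :=
  ∀ u v : List Bool, u <:+: w → v <:+: w → u.length = v.length →
    |(u.count true : ℤ) - (v.count true : ℤ)| ≤ 1

/-- An infinite binary word is balanced. -/
def BalancedInf (t : ℕ → Bool) : Prop :=
  ∀ u v : List Bool, IsFactorInf t u → IsFactorInf t v → u.length = v.length →
    |(u.count true : ℤ) - (v.count true : ℤ)| ≤ 1

/-- The Sturmian word of slope `α` and intercept `ρ` defined via floors. -/
def SturmianFloor (α ρ : ℝ) (t : ℕ → Bool) : Prop :=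
  ∀ n : ℕ, t n = true ↔ ⌊((n : ℝ) + 1) * α + ρ⌋ ≠ ⌊(n : ℝ) * α + ρ⌋

/-- The Sturmian word of slope `α` and intercept `ρ` defined via ceilings. -/
def SturmianCeil (α ρ : ℝ) (t : ℕ → Bool) : Prop :=
  ∀ n : ℕ, t n = true ↔ ⌈((n : ℝ) + 1) * α + ρ⌉ ≠ ⌈(n : ℝ) * α + ρ⌉

/-- Aperiodic Sturmian words: those of irrational slope. -/
def IsAperiodicSturmian (t : ℕ → Bool) : Prop :=
  ∃ α ρ : ℝ, α ∈ Set.Icc (0 : ℝ) 1 ∧ ρ ∈ Set.Icc (0 : ℝ) 1 ∧ Irrational α ∧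
    (SturmianFloor α ρ t ∨ SturmianCeil α ρ t)

/-- Standard Sturmian words: those with `ρ = α`. -/
def IsStandardSturmian (t : ℕ → Bool) : Prop :=
  ∃ α : ℝ, α ∈ Set.Icc (0 : ℝ) 1 ∧ (SturmianFloor α α t ∨ SturmianCeil α α t)

/-- A fine infinite binary word: `(min(t), max(t)) = (a·s, b·s)` for some infinite word `s`. -/
def FineBool (t : ℕ → Bool) : Prop :=
  ∃ s : ℕ → Bool, IsMinInf (· < ·) t (consInf false s) ∧ IsMaxInf (· < ·) t (consInf true s)

/-- A periodic infinite word. -/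
def PeriodicInf {A : Type*} (t : ℕ → A) : Prop := ∃ p, 0 < p ∧ ∀ i, t (i + p) = t i

/-- An ultimately periodic infinite word. -/
def UltPeriodicInf {A : Type*} (t : ℕ → A) : Prop :=
  ∃ p, 0 < p ∧ ∃ m, ∀ i, m ≤ i → t (i + p) = t i

set_option linter.unusedSectionVars false
section AuxMin

variable {A : Type*} [DecidableEq A] {r : A → A → Prop}

theorem listLe_refl (u : List A) : listLe r u u := Or.inl rfl

theorem listLe_nil (u : List A) : listLe r [] u := by
  cases u with
  | nil => exact Or.inl rfl
  | cons a l => exact Or.inr List.Lex.nil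

theorem listLe_cons (a : A) {x y : List A} (h : listLe r x y) :
    listLe r (a :: x) (a :: y) := by
  rcases h with rfl | h
  · exact Or.inl rfl
  · exact Or.inr (List.Lex.cons h)

theorem listLe_cons_cancel (hr : IsStrictTotalOrder A r) {a : A} {x y : List A}
    (h : listLe r (a :: x) (a :: y)) : listLe r x y := by
  haveI := hr
  rcases h with h | h
  · exact Or.inl (by injection h)
  · cases h with
    | rel h' => exact absurd h' (irrefl_of r a)
    | cons h' => exact Or.inr h'

theorem lex_asymm (hr : IsStrictTotalOrder A r) :
    ∀ {x y : List A}, List.Lex r x y → List.Lex r y x → False := by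
  haveI := hr
  intro x y h
  induction h with
  | nil => intro h2; cases h2
  | @rel a l₁ b l₂ h =>
    intro h2
    cases h2 with
    | rel h' => exact asymm_of r h h'
    | cons h' => exact irrefl_of r _ h
  | @cons a l₁ l₂ h ih =>
    intro h2
    cases h2 with
    | rel h' => exact irrefl_of r _ h'
    | cons h' => exact ih h'

theorem listLe_antisymm (hr : IsStrictTotalOrder A r) {x y : List A}
    (h1 : listLe r x y) (h2 : listLe r y x) : x = y := by
  rcases h1 with rfl | h1
  · rfl
  · rcases h2 with rfl | h2
    · rfl
    · exact absurd h2 (fun h2 => lex_asymm hr h1 h2)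

theorem listLe_singleton_elim {d e : A} (h : listLe r [d] [e]) : d = e ∨ r d e := by
  rcases h with h | h
  · exact Or.inl (by injection h)
  · cases h with
    | rel h' => exact Or.inr h'
    | cons h' => cases h'

theorem lex_append : ∀ {x y : List A}, List.Lex r x y → x.length = y.length →
    ∀ (u v : List A), List.Lex r (x ++ u) (y ++ v) := by
  intro x y h
  induction h with
  | nil => intro hl; simp at hl
  | @rel a l₁ b l₂ h => intro _ u v; exact List.Lex.rel h
  | @cons a l₁ l₂ h ih =>
    intro hl u v
    exact List.Lex.cons (ih (by simpa using hl) u v)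

theorem listLe_append_left (t : List A) {x y : List A} (h : listLe r x y) :
    listLe r (t ++ x) (t ++ y) := by
  induction t with
  | nil => simpa
  | cons a t ih => simp only [List.cons_append]; exact listLe_cons a ih

theorem listLe_append_cancel (hr : IsStrictTotalOrder A r) (t : List A) {x y : List A}
    (h : listLe r (t ++ x) (t ++ y)) : listLe r x y := by
  induction t with
  | nil => simpa using h
  | cons a t ih =>
    simp only [List.cons_append] at h
    exact ih (listLe_cons_cancel hr h)

/-- Comparison of words of possibly different lengths by prefixes. -/
def Pre (r : A → A → Prop) (x y : List A) : Prop :=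
  ∀ j, j ≤ x.length → j ≤ y.length → listLe r (x.take j) (y.take j)

theorem pre_cons_cancel (hr : IsStrictTotalOrder A r) {a : A} {x y : List A}
    (h : Pre r (a :: x) (a :: y)) : Pre r x y := by
  intro j hj1 hj2
  have := h (j + 1) (by simpa using hj1) (by simpa using hj2)
  simp only [List.take_succ_cons] at this
  exact listLe_cons_cancel hr this

theorem pre_append_left (t : List A) {x y : List A} (h : Pre r x y) :
    Pre r (t ++ x) (t ++ y) := by
  intro j hj1 hj2
  rw [List.take_append, List.take_append]
  refine listLe_append_left _ (h (j - t.length) ?_ ?_)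
  · simp [List.length_append] at hj1; omega
  · simp [List.length_append] at hj2; omega

theorem pre_of_take2 {c d e : A} {x y : List A} (h : r d e) :
    Pre r (c :: d :: x) (c :: e :: y) := by
  intro j _ _
  match j with
  | 0 => exact Or.inl rfl
  | 1 => exact Or.inl rfl
  | (j + 2) =>
    simp only [List.take_succ_cons]
    exact Or.inr (List.Lex.cons (List.Lex.rel h))

theorem psiW_nil (z : A) : psiW z [] = [] := rfl

theorem psiW_cons (z a : A) (u : List A) :
    psiW z (a :: u) = (if a = z then [z] else [z, a]) ++ psiW z u := by
  simp [psiW]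

theorem psiW_append (z : A) (u v : List A) :
    psiW z (u ++ v) = psiW z u ++ psiW z v := by
  simp [psiW]

theorem psiWz_head (z : A) (u : List A) : ∃ t, psiW z u ++ [z] = z :: t := by
  cases u with
  | nil => exact ⟨[], rfl⟩
  | cons a u =>
    rw [psiW_cons]
    by_cases h : a = z
    · exact ⟨psiW z u ++ [z], by simp [h]⟩
    · exact ⟨a :: (psiW z u ++ [z]), by simp [h]⟩

end AuxMin
set_option linter.unusedSectionVars false
section AuxMin2

variable {A : Type*} [DecidableEq A] {r : A → A → Prop}

/-- Key monotonicity lemma: `ψ_z` preserves the prefix-comparison order. -/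
theorem pre_psi (hr : IsStrictTotalOrder A r) (z : A) :
    ∀ (p q : List A), Pre r p q → Pre r (psiW z p ++ [z]) (psiW z q ++ [z]) := by
  haveI := hr
  intro p
  induction p with
  | nil =>
    intro q _ j hj1 hj2
    simp only [psiW_nil, List.nil_append, List.length_cons, List.length_nil] at hj1
    match j with
    | 0 => exact Or.inl rfl
    | 1 =>
      obtain ⟨t, ht⟩ := psiWz_head z q
      rw [ht]
      exact Or.inl rfl
  | cons a p' ih =>
    intro q hpre
    cases q with
    | nil =>
      intro j hj1 hj2
      simp only [psiW_nil, List.nil_append, List.length_cons, List.length_nil] at hj2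
      match j with
      | 0 => exact Or.inl rfl
      | 1 =>
        obtain ⟨t, ht⟩ := psiWz_head z (a :: p')
        rw [ht]
        exact Or.inl rfl
    | cons b q' =>
      have h1 : listLe r [a] [b] := by
        have := hpre 1 (by simp) (by simp)
        simpa using this
      obtain ⟨tp, htp⟩ := psiWz_head z p'
      obtain ⟨tq, htq⟩ := psiWz_head z q'
      rcases listLe_singleton_elim h1 with rfl | hab
      · have hp := pre_cons_cancel hr hpre
        have hψ := ih q' hp
        rw [psiW_cons, psiW_cons, List.append_assoc, List.append_assoc]
        exact pre_append_left _ hψ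
      · rw [psiW_cons, psiW_cons, List.append_assoc, List.append_assoc, htp, htq]
        by_cases haz : a = z
        · have hbz : b ≠ z := by
            intro hb
            rw [haz, hb] at hab
            exact irrefl_of r z hab
          subst haz
          simp only [if_pos rfl, if_neg hbz, List.cons_append, List.nil_append,
            List.singleton_append]
          exact pre_of_take2 hab
        · by_cases hbz : b = z
          · subst hbz
            simp only [if_neg haz, if_pos rfl, List.cons_append, List.nil_append,
              List.singleton_append]
            exact pre_of_take2 hab
          · simp only [if_neg haz, if_neg hbz, List.cons_append, List.nil_append]
            exact pre_of_take2 hab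

theorem psi_infix (z : A) {u w' : List A} (h : u <:+: w') :
    psiW z u ++ [z] <:+: psiW z w' ++ [z] := by
  obtain ⟨s, t, rfl⟩ := h
  obtain ⟨tt, htt⟩ := psiWz_head z t
  refine ⟨psiW z s, tt, ?_⟩
  rw [psiW_append, psiW_append]
  simp only [List.append_assoc, List.singleton_append]
  rw [← htt]

/-- Every position in `ψ_z(w') z` is either at a block boundary or just after
the `z` beginning a two-letter block. -/
theorem psi_classify (z : A) : ∀ (w' : List A) (i : ℕ), i ≤ (psiW z w').length →
    (∃ s, s <:+ w' ∧ (psiW z w' ++ [z]).drop i = psiW z s ++ [z]) ∨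
    (∃ c s i₀, (c :: s) <:+ w' ∧ c ≠ z ∧ i = i₀ + 1 ∧
      (psiW z w' ++ [z]).drop i₀ = psiW z (c :: s) ++ [z]) := by
  intro w'
  induction w' with
  | nil =>
    intro i hi
    simp only [psiW_nil, List.length_nil, Nat.le_zero] at hi
    subst hi
    exact Or.inl ⟨[], List.suffix_refl _, rfl⟩
  | cons a w'' ih =>
    intro i hi
    cases i with
    | zero => exact Or.inl ⟨a :: w'', List.suffix_refl _, rfl⟩
    | succ i' =>
      by_cases haz : a = z
      · have heq : psiW z (a :: w'') ++ [z] = z :: (psiW z w'' ++ [z]) := by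
          rw [psiW_cons]; simp [haz]
        have hi' : i' ≤ (psiW z w'').length := by
          rw [psiW_cons] at hi; simp [haz] at hi; omega
        rcases ih i' hi' with ⟨s, hs, hdrop⟩ | ⟨c, s, i₀, hs, hcz, hieq, hdrop⟩
        · exact Or.inl ⟨s, hs.trans (List.suffix_cons a w''), by
            rw [heq, List.drop_succ_cons, hdrop]⟩
        · exact Or.inr ⟨c, s, i₀ + 1, hs.trans (List.suffix_cons a w''), hcz, by omega, by
            rw [heq, List.drop_succ_cons, hdrop]⟩
      · have heq : psiW z (a :: w'') ++ [z] = z :: a :: (psiW z w'' ++ [z]) := by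
          rw [psiW_cons]; simp [haz]
        cases i' with
        | zero =>
          exact Or.inr ⟨a, w'', 0, List.suffix_refl _, haz, rfl, by simp⟩
        | succ i'' =>
          have hi'' : i'' ≤ (psiW z w'').length := by
            rw [psiW_cons] at hi; simp [haz] at hi; omega
          rcases ih i'' hi'' with ⟨s, hs, hdrop⟩ | ⟨c, s, i₀, hs, hcz, hieq, hdrop⟩
          · exact Or.inl ⟨s, hs.trans (List.suffix_cons a w''), by
              rw [heq, List.drop_succ_cons, List.drop_succ_cons, hdrop]⟩
          · exact Or.inr ⟨c, s, i₀ + 2, hs.trans (List.suffix_cons a w''), hcz, by omega, by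
              rw [heq, List.drop_succ_cons, List.drop_succ_cons, hdrop]⟩

/-- Unique parsing: `ψ` reflects the prefix order. -/
theorem psi_prefix_cancel (z : A) : ∀ (p q : List A),
    psiW z p ++ [z] <+: psiW z q ++ [z] → p <+: q := by
  intro p
  induction p with
  | nil => intro q _; exact List.nil_prefix
  | cons a p' ih =>
    intro q h
    cases q with
    | nil =>
      exfalso
      have hlen := h.length_le
      have h2 : 1 ≤ (if a = z then [z] else [z, a]).length := by split <;> simp
      rw [psiW_cons, List.append_assoc] at hlen
      simp only [psiW_nil, List.nil_append, List.length_append, List.length_cons,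
        List.length_nil] at hlen
      omega
    | cons b q' =>
      rw [psiW_cons, psiW_cons, List.append_assoc, List.append_assoc] at h
      obtain ⟨tp, htp⟩ := psiWz_head z p'
      obtain ⟨tq, htq⟩ := psiWz_head z q'
      rw [htp, htq] at h
      by_cases haz : a = z <;> by_cases hbz : b = z
      · subst haz; subst hbz
        simp only [if_pos rfl, List.singleton_append] at h
        have h2 := (List.cons_prefix_cons.mp h).2
        rw [← htp, ← htq] at h2
        exact List.cons_prefix_cons.mpr ⟨rfl, ih q' h2⟩
      · exfalso
        subst haz
        simp only [if_pos rfl, if_neg hbz, List.singleton_append, List.cons_append] at h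
        have h2 := (List.cons_prefix_cons.mp h).2
        exact hbz ((List.cons_prefix_cons.mp h2).1.symm)
      · exfalso
        subst hbz
        simp only [if_pos rfl, if_neg haz, List.singleton_append, List.cons_append] at h
        have h2 := (List.cons_prefix_cons.mp h).2
        exact haz (List.cons_prefix_cons.mp h2).1
      · simp only [if_neg haz, if_neg hbz, List.cons_append, List.nil_append] at h
        have h2 := (List.cons_prefix_cons.mp h).2
        have hab := (List.cons_prefix_cons.mp h2).1
        have h3 := (List.cons_prefix_cons.mp h2).2
        rw [← htp, ← htq] at h3
        exact List.cons_prefix_cons.mpr ⟨hab, ih q' h3⟩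

theorem infix_drop_take {u w : List A} (h : u <:+: w) :
    ∃ i, i + u.length ≤ w.length ∧ u = (w.drop i).take u.length := by
  obtain ⟨s, t, rfl⟩ := h
  refine ⟨s.length, by simp [List.length_append], ?_⟩
  rw [List.append_assoc, List.drop_left, List.take_left]

theorem drop_take_infix (w : List A) (i j : ℕ) : (w.drop i).take j <:+: w :=
  ((List.take_prefix _ _).isInfix).trans (List.drop_suffix i w).isInfix

theorem head_of_take_cons {u X : List A} {c : A} (h : u = (c :: X).take u.length)
    (hu : u ≠ []) : ∃ u', u = c :: u' := by
  cases u with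
  | nil => exact absurd rfl hu
  | cons a u' =>
    rw [List.length_cons, List.take_succ_cons, List.cons.injEq] at h
    exact ⟨u', by rw [h.1]⟩

end AuxMin2
set_option linter.unusedSectionVars false
section AuxMin3

variable {A : Type*} [DecidableEq A] {r : A → A → Prop}

theorem pre_of_min {w' m' : List A} (hm' : IsMinFin r w' m') {s : List A}
    (hs : s <:+ w') : Pre r m' s := by
  intro j hj1 hj2
  have hmin := hm'.2.1 j hj1
  refine hmin.2.2 (s.take j) ((List.take_prefix j s).isInfix.trans hs.isInfix) ?_
  rw [List.length_take]
  omega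

theorem isMinFacLen_unique (hr : IsStrictTotalOrder A r) {w : List A} {k : ℕ}
    {m₁ m₂ : List A} (h1 : IsMinFacLen r w k m₁) (h2 : IsMinFacLen r w k m₂) :
    m₁ = m₂ :=
  listLe_antisymm hr (h1.2.2 m₂ h2.1 h2.2.1) (h2.2.2 m₁ h1.1 h1.2.1)

theorem isMinFin_unique_aux (hr : IsStrictTotalOrder A r) {w m₁ m₂ : List A}
    (h1 : IsMinFin r w m₁) (h2 : IsMinFin r w m₂) (hl : m₁.length ≤ m₂.length) :
    m₁ = m₂ := by
  have hpref : m₁ = m₂.take m₁.length := by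
    have a1 := h1.2.1 m₁.length le_rfl
    rw [List.take_length] at a1
    exact isMinFacLen_unique hr a1 (h2.2.1 m₁.length hl)
  rcases eq_or_lt_of_le hl with heq | hlt
  · rw [hpref, heq, List.take_length]
  · exfalso
    have a2 := h2.2.1 (m₁.length + 1) hlt
    refine h1.2.2 _ a2 ?_
    have h3 := List.take_prefix m₁.length (m₂.take (m₁.length + 1))
    rw [List.take_take, min_eq_left (by omega)] at h3
    rw [← hpref] at h3
    exact h3

theorem isMinFin_unique (hr : IsStrictTotalOrder A r) {w m₁ m₂ : List A}
    (h1 : IsMinFin r w m₁) (h2 : IsMinFin r w m₂) : m₁ = m₂ := by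
  rcases le_total m₁.length m₂.length with h | h
  · exact isMinFin_unique_aux hr h1 h2 h
  · exact (isMinFin_unique_aux hr h2 h1 h).symm

theorem minFacLen_ext (hr : IsStrictTotalOrder A r) {w' m' : List A}
    (hm' : IsMinFin r w' m') (d : A) (hfac : m' ++ [d] <:+: w')
    (hle : ∀ e, m' ++ [e] <:+: w' → listLe r [d] [e]) :
    IsMinFacLen r w' (m'.length + 1) (m' ++ [d]) := by
  refine ⟨hfac, by simp, ?_⟩
  intro v hv hvlen
  obtain ⟨e, he⟩ : ∃ e, v.drop m'.length = [e] := by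
    rw [← List.length_eq_one_iff]
    rw [List.length_drop]
    omega
  have hv2 : v = v.take m'.length ++ [e] := by rw [← he, List.take_append_drop]
  have hmin := hm'.2.1 m'.length le_rfl
  rw [List.take_length] at hmin
  have h1 : listLe r m' (v.take m'.length) :=
    hmin.2.2 _ ((List.take_prefix _ v).isInfix.trans hv)
      (by rw [List.length_take]; omega)
  rcases h1 with heq | hlex
  · rw [hv2, ← heq]
    refine listLe_append_left _ (hle e ?_)
    rw [hv2, ← heq] at hv
    exact hv
  · rw [hv2]
    exact Or.inr (lex_append hlex (by rw [List.length_take]; omega) _ _)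

theorem psi_ext_prefix (z : A) {m' s : List A} {d : A}
    (h : (psiW z m' ++ [z]) ++ [d] <+: psiW z s ++ [z]) :
    m' ++ [d] <+: s := by
  have hmp : m' <+: s := psi_prefix_cancel z m' s ((List.prefix_append _ _).trans h)
  obtain ⟨rest, rfl⟩ := hmp
  have hcancel : [z, d] <+: psiW z rest ++ [z] := by
    rw [psiW_append] at h
    have h' : psiW z m' ++ [z, d] <+: psiW z m' ++ (psiW z rest ++ [z]) := by
      simpa [List.append_assoc] using h
    simpa using (List.prefix_append_right_inj (psiW z m')).mp h'
  cases rest with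
  | nil =>
    exfalso
    have := hcancel.length_le
    simp [psiW_nil] at this
  | cons e rest' =>
    rw [psiW_cons, List.append_assoc] at hcancel
    by_cases hez : e = z
    · obtain ⟨t', ht'⟩ := psiWz_head z rest'
      rw [if_pos hez, List.singleton_append, ht'] at hcancel
      have hd : d = z := (List.cons_prefix_cons.mp (List.cons_prefix_cons.mp hcancel).2).1
      rw [hd]
      exact (List.prefix_append_right_inj m').mpr
        (List.cons_prefix_cons.mpr ⟨hez.symm, List.nil_prefix⟩)
    · rw [if_neg hez, List.cons_append, List.cons_append, List.nil_append] at hcancel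
      have hd : d = e := (List.cons_prefix_cons.mp (List.cons_prefix_cons.mp hcancel).2).1
      rw [hd]
      exact (List.prefix_append_right_inj m').mpr
        (List.cons_prefix_cons.mpr ⟨rfl, List.nil_prefix⟩)

theorem dle_contra (hr : IsStrictTotalOrder A r) {z d e' : A}
    (h1 : listLe r [d] [if e' = z then z else e']) (h2 : r e' d) : False := by
  haveI := hr
  rcases listLe_singleton_elim h1 with h | h
  · by_cases hez : e' = z
    · rw [if_pos hez] at h; rw [hez, h] at h2; exact irrefl_of r z h2
    · rw [if_neg hez] at h; rw [h] at h2; exact irrefl_of r _ h2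
  · by_cases hez : e' = z
    · rw [if_pos hez] at h; rw [hez] at h2; exact asymm_of r h h2
    · rw [if_neg hez] at h; exact asymm_of r h h2

end AuxMin3
set_option linter.unusedSectionVars false
section AuxMin4

variable {A : Type*} [DecidableEq A] {r : A → A → Prop}

theorem drop_block (z : A) {w' s : List A} {c : A} {i₀ : ℕ} (hcz : c ≠ z)
    (hdrop : (psiW z w' ++ [z]).drop i₀ = psiW z (c :: s) ++ [z]) :
    (psiW z w' ++ [z]).drop (i₀ + 1) = c :: (psiW z s ++ [z]) := by
  have h2 : (psiW z w' ++ [z]).drop (i₀ + 1) = ((psiW z w' ++ [z]).drop i₀).drop 1 := by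
    rw [List.drop_drop]
  rw [h2, hdrop, psiW_cons, if_neg hcz]
  simp

theorem blk_take2 (z e' : A) : ∃ t0, (if e' = z then [z] else [z, e']) ++ [z] =
    [z, if e' = z then z else e'] ++ t0 := by
  by_cases hez : e' = z
  · exact ⟨[], by simp [hez]⟩
  · exact ⟨[z], by simp [hez]⟩

theorem max_step (hr : IsStrictTotalOrder A r) (z : A) {w' m' : List A}
    (hm' : IsMinFin r w' m') {d : A} {s₁ : List A} (hs₁ : s₁ <:+ w')
    (hpre : (psiW z m' ++ [z]) ++ [d] <+: psiW z s₁ ++ [z])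
    (hcmp : ∀ e', m' ++ [e'] <:+: w' → r e' d → False) : False := by
  haveI := hr
  have hfac : m' ++ [d] <:+: w' := ((psi_ext_prefix z hpre).isInfix).trans hs₁.isInfix
  have hle : ∀ e, m' ++ [e] <:+: w' → listLe r [d] [e] := by
    intro e he
    rcases trichotomous_of r d e with h | h | h
    · exact Or.inr (List.Lex.rel h)
    · exact Or.inl (by rw [h])
    · exact (hcmp e he h).elim
  exact hm'.2.2 (m' ++ [d]) (minFacLen_ext hr hm' d hfac hle) (List.prefix_append _ _)

theorem minFin_caseP (hr : IsStrictTotalOrder A r) (z : A) (w' m' : List A)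
    (hm' : IsMinFin r w' m') (hP : ∀ b ∈ w', b ≠ z → r z b) :
    IsMinFin r (psiW z w' ++ [z]) (psiW z m' ++ [z]) := by
  haveI := hr
  have hm'fac : m' <:+: w' := by
    have h := hm'.2.1 m'.length le_rfl
    rw [List.take_length] at h
    exact h.1
  have hMfac : psiW z m' ++ [z] <:+: psiW z w' ++ [z] := psi_infix z hm'fac
  obtain ⟨tM, htM⟩ := psiWz_head z m'
  have hwlen : (psiW z w' ++ [z]).length = (psiW z w').length + 1 := by simp
  refine ⟨by simp, ?_, ?_⟩
  · intro j hj
    refine ⟨(List.take_prefix j _).isInfix.trans hMfac, by rw [List.length_take]; omega, ?_⟩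
    intro u hu hulen
    rcases Nat.eq_zero_or_pos j with rfl | hj1
    · rw [List.length_eq_zero_iff] at hulen
      rw [hulen, List.take_zero]
      exact Or.inl rfl
    obtain ⟨i, hij, hueq⟩ := infix_drop_take hu
    rw [hulen] at hij hueq
    have hi : i ≤ (psiW z w').length := by rw [hwlen] at hij; omega
    rcases psi_classify z w' i hi with ⟨s, hs, hdrop⟩ | ⟨c, s, i₀, hs, hcz, rfl, hdrop⟩
    · have hpre := pre_psi hr z m' s (pre_of_min hm' hs)
      have hd : ((psiW z w' ++ [z]).drop i).length = (psiW z w' ++ [z]).length - i :=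
        List.length_drop
      rw [hdrop] at hd
      have hlen2 : j ≤ (psiW z s ++ [z]).length := by omega
      have hres := hpre j hj hlen2
      rw [hueq, hdrop]
      exact hres
    · have hdrop1 := drop_block z hcz hdrop
      have hrzc : r z c := hP c (hs.subset List.mem_cons_self) hcz
      rw [hueq, hdrop1, htM]
      obtain ⟨j', rfl⟩ : ∃ j', j = j' + 1 := ⟨j - 1, by omega⟩
      simp only [List.take_succ_cons]
      exact Or.inr (List.Lex.rel hrzc)
  · intro m₁ hm₁ hpref
    obtain ⟨t1, ht1⟩ := hpref
    obtain ⟨d, rfl⟩ : ∃ d, t1 = [d] := by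
      rw [← List.length_eq_one_iff]
      have h2 := hm₁.2.1
      rw [← ht1, List.length_append] at h2
      omega
    subst ht1
    obtain ⟨i, hij, hueq⟩ := infix_drop_take hm₁.1
    have hlen₁ : ((psiW z m' ++ [z]) ++ [d]).length = (psiW z m').length + 2 := by simp
    have hi : i ≤ (psiW z w').length := by
      rw [hwlen, hlen₁] at hij
      omega
    rcases psi_classify z w' i hi with ⟨s, hs, hdrop⟩ | ⟨c, s, i₀, hs, hcz, rfl, hdrop⟩
    · rw [hdrop] at hueq
      have hm₁pref : (psiW z m' ++ [z]) ++ [d] <+: psiW z s ++ [z] := by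
        rw [hueq]; exact List.take_prefix _ _
      refine max_step hr z hm' hs hm₁pref ?_
      intro e' hve' hed
      have hX := psi_infix z hve'
      obtain ⟨t0, ht0⟩ := blk_take2 z e'
      have hXeq : psiW z (m' ++ [e']) ++ [z] =
          (psiW z m' ++ [z, if e' = z then z else e']) ++ t0 := by
        rw [psiW_append, psiW_cons, psiW_nil, List.append_nil, List.append_assoc, ht0]
        simp [List.append_assoc]
      have hPfac : psiW z m' ++ [z, if e' = z then z else e'] <:+: psiW z w' ++ [z] := by
        refine (List.IsPrefix.isInfix ⟨t0, hXeq.symm⟩).trans hX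
      have hcmp := hm₁.2.2 _ hPfac (by simp)
      have hcan : listLe r [d] [if e' = z then z else e'] := by
        refine listLe_append_cancel hr (psiW z m' ++ [z]) ?_
        simpa [List.append_assoc] using hcmp
      exact dle_contra hr hcan hed
    · exfalso
      have hdrop1 := drop_block z hcz hdrop
      rw [hdrop1] at hueq
      have hne : (psiW z m' ++ [z]) ++ [d] ≠ [] := by simp
      obtain ⟨u', hu'⟩ := head_of_take_cons hueq hne
      rw [htM, List.cons_append] at hu'
      injection hu' with h1 _
      exact hcz h1.symm

theorem minFin_caseN (hr : IsStrictTotalOrder A r) (z : A) (w' m' : List A)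
    (hm' : IsMinFin r w' m') (c₀ : A) (tm : List A) (hm'eq : m' = c₀ :: tm)
    (hc₀ : r c₀ z) :
    IsMinFin r (psiW z w' ++ [z]) (c₀ :: (psiW z tm ++ [z])) := by
  haveI := hr
  have hc₀z : c₀ ≠ z := fun h => irrefl_of r z (h ▸ hc₀)
  have hm'fac : m' <:+: w' := by
    have h := hm'.2.1 m'.length le_rfl
    rw [List.take_length] at h
    exact h.1
  have hMfac : psiW z m' ++ [z] <:+: psiW z w' ++ [z] := psi_infix z hm'fac
  have hzN : psiW z m' ++ [z] = z :: (c₀ :: (psiW z tm ++ [z])) := by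
    rw [hm'eq, psiW_cons, if_neg hc₀z]
    simp
  have hNfac : c₀ :: (psiW z tm ++ [z]) <:+: psiW z w' ++ [z] := by
    refine (List.IsSuffix.isInfix ?_).trans (hzN ▸ hMfac)
    exact List.suffix_cons z _
  have hwlen : (psiW z w' ++ [z]).length = (psiW z w').length + 1 := by simp
  refine ⟨by simp, ?_, ?_⟩
  · intro j hj
    refine ⟨(List.take_prefix j _).isInfix.trans hNfac, by rw [List.length_take]; omega, ?_⟩
    intro u hu hulen
    rcases Nat.eq_zero_or_pos j with rfl | hj1
    · rw [List.length_eq_zero_iff] at hulen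
      rw [hulen, List.take_zero]
      exact Or.inl rfl
    obtain ⟨i, hij, hueq⟩ := infix_drop_take hu
    rw [hulen] at hij hueq
    have hi : i ≤ (psiW z w').length := by rw [hwlen] at hij; omega
    rcases psi_classify z w' i hi with ⟨s, hs, hdrop⟩ | ⟨c, s, i₀, hs, hcz, rfl, hdrop⟩
    · obtain ⟨ts, hts⟩ := psiWz_head z s
      rw [hueq, hdrop, hts]
      obtain ⟨j', rfl⟩ : ∃ j', j = j' + 1 := ⟨j - 1, by omega⟩
      simp only [List.take_succ_cons]
      exact Or.inr (List.Lex.rel hc₀)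
    · have hdrop1 := drop_block z hcz hdrop
      have hcs : psiW z (c :: s) ++ [z] = z :: (c :: (psiW z s ++ [z])) := by
        rw [psiW_cons, if_neg hcz]
        simp
      have hpre0 := pre_psi hr z m' (c :: s) (pre_of_min hm' hs)
      rw [hzN, hcs] at hpre0
      have hpre := pre_cons_cancel hr hpre0
      have hd : ((psiW z w' ++ [z]).drop (i₀ + 1)).length =
          (psiW z w' ++ [z]).length - (i₀ + 1) := List.length_drop
      rw [hdrop1] at hd
      have hlen2 : j ≤ (c :: (psiW z s ++ [z])).length := by omega
      have hres := hpre j hj hlen2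
      rw [hueq, hdrop1]
      exact hres
  · intro m₁ hm₁ hpref
    obtain ⟨t1, ht1⟩ := hpref
    obtain ⟨d, rfl⟩ : ∃ d, t1 = [d] := by
      rw [← List.length_eq_one_iff]
      have h2 := hm₁.2.1
      rw [← ht1, List.length_append] at h2
      omega
    subst ht1
    obtain ⟨i, hij, hueq⟩ := infix_drop_take hm₁.1
    have hi : i ≤ (psiW z w').length := by
      rw [hwlen] at hij
      simp only [List.length_append, List.length_cons] at hij
      omega
    rcases psi_classify z w' i hi with ⟨s, hs, hdrop⟩ | ⟨c, s, i₀, hs, hcz, rfl, hdrop⟩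
    · exfalso
      obtain ⟨ts, hts⟩ := psiWz_head z s
      rw [hdrop, hts] at hueq
      have hne : (c₀ :: (psiW z tm ++ [z])) ++ [d] ≠ [] := by simp
      obtain ⟨u', hu'⟩ := head_of_take_cons hueq hne
      rw [List.cons_append] at hu'
      injection hu' with h1 _
      exact hc₀z h1
    · have hdrop1 := drop_block z hcz hdrop
      rw [hdrop1] at hueq
      have hcs : psiW z (c :: s) ++ [z] = z :: (c :: (psiW z s ++ [z])) := by
        rw [psiW_cons, if_neg hcz]
        simp
      have hm₁pref : (psiW z m' ++ [z]) ++ [d] <+: psiW z (c :: s) ++ [z] := by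
        rw [hcs, hzN]
        have h3 : (c₀ :: (psiW z tm ++ [z])) ++ [d] <+: c :: (psiW z s ++ [z]) := by
          rw [hueq]; exact List.take_prefix _ _
        rw [List.cons_append]
        exact List.cons_prefix_cons.mpr ⟨rfl, h3⟩
      refine max_step hr z hm' hs hm₁pref ?_
      intro e' hve' hed
      have hX := psi_infix z hve'
      obtain ⟨t0, ht0⟩ := blk_take2 z e'
      -- the image of `m' ++ [e']` with its first letter removed
      have hXeq : ((psiW z (m' ++ [e'])) ++ [z]).drop 1 =
          ((c₀ :: psiW z tm) ++ [z, if e' = z then z else e']) ++ t0 := by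
        rw [psiW_append, psiW_cons, psiW_nil, List.append_nil, hm'eq, psiW_cons,
          if_neg hc₀z]
        simp only [List.cons_append, List.append_assoc, List.drop_succ_cons,
          List.drop_zero, List.nil_append]
        rw [ht0]
        simp [List.append_assoc]
      have hPfac : (c₀ :: psiW z tm) ++ [z, if e' = z then z else e'] <:+:
          psiW z w' ++ [z] := by
        refine (List.IsPrefix.isInfix ⟨t0, hXeq.symm⟩).trans ?_
        exact ((List.drop_suffix 1 _).isInfix).trans hX
      have hcmp := hm₁.2.2 _ hPfac (by simp)
      have hcan : listLe r [d] [if e' = z then z else e'] := by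
        refine listLe_append_cancel hr ((c₀ :: psiW z tm) ++ [z]) ?_
        have h4 : (c₀ :: (psiW z tm ++ [z])) ++ [d] =
            ((c₀ :: psiW z tm) ++ [z]) ++ [d] := by simp
        rw [h4] at hcmp
        simpa [List.append_assoc] using hcmp
      exact dle_contra hr hcan hed

end AuxMin4
/-- If `w = ψ_z(w')z` with `w'` nonempty (so `w` ends with `z`), then
`min(w) = ψ_z(min(w'))z` if `min(w)` begins with `z`, and `min(w) = z⁻¹ψ_z(min(w'))z`
otherwise. -/
theorem min_psi_ending {A : Type*} [Fintype A] [DecidableEq A]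
    (r : A → A → Prop) (hr : IsStrictTotalOrder A r) (z : A) (w w' : List A)
    (hw' : w' ≠ []) (hw : w = psiW z w' ++ [z]) :
    ∀ m m' : List A, IsMinFin r w m → IsMinFin r w' m' →
      (m.head? = some z → m = psiW z m' ++ [z]) ∧
      (m.head? ≠ some z → z :: m = psiW z m' ++ [z]) := by
  haveI := hr
  subst hw
  intro m m' hm hm'
  have hm'ne : m' ≠ [] := hm'.1
  by_cases hP : ∀ b ∈ w', b ≠ z → r z b
  · have hM := minFin_caseP hr z w' m' hm' hP
    have heq := isMinFin_unique hr hm hM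
    obtain ⟨tM, htM⟩ := psiWz_head z m'
    constructor
    · intro _; exact heq
    · intro hne
      exact absurd (show m.head? = some z by rw [heq, htM]; rfl) hne
  · push_neg at hP
    obtain ⟨b, hbw, hbz, hbnr⟩ := hP
    have hbr : r b z := by
      rcases trichotomous_of r b z with h | h | h
      · exact h
      · exact absurd h hbz
      · exact absurd h hbnr
    obtain ⟨c₀, tm, hm'eq⟩ : ∃ c₀ tm, m' = c₀ :: tm := by
      cases m' with
      | nil => exact absurd rfl hm'ne
      | cons a l => exact ⟨a, l, rfl⟩
    have hbfac : [b] <:+: w' := by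
      obtain ⟨p, q, hpq⟩ := List.append_of_mem hbw
      exact ⟨p, q, by rw [hpq]; simp⟩
    have hc₀ : r c₀ z := by
      have h1 := (hm'.2.1 1 (by rw [hm'eq]; simp)).2.2 [b] hbfac rfl
      rw [hm'eq] at h1
      simp only [List.take_succ_cons, List.take_zero] at h1
      rcases listLe_singleton_elim h1 with rfl | h2
      · exact hbr
      · exact trans_of r h2 hbr
    have hc₀z : c₀ ≠ z := fun h => irrefl_of r z (h ▸ hc₀)
    have hN := minFin_caseN hr z w' m' hm' c₀ tm hm'eq hc₀
    have heq := isMinFin_unique hr hm hN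
    constructor
    · intro hhead
      exfalso
      rw [heq] at hhead
      rw [List.head?_cons, Option.some.injEq] at hhead
      exact hc₀z hhead
    · intro _
      rw [heq, hm'eq, psiW_cons, if_neg hc₀z]
      simp
end

section
/- A finite word w over the two-letter alphabet {a, b} with a < b is not balanced if and only if there exists a finite word u such that aua is a prefix of min(w) and bub is a prefix of max(w). -/
section NBIPAux
open List

private lemma bool_lt_iff {x y : Bool} : x < y ↔ x = false ∧ y = true := by
  cases x <;> cases y <;> simp

private lemma listLe_refl_s5 (u : List Bool) : listLe (· < ·) u u := Or.inl rfl

private lemma listLe_trans {u v w : List Bool} (h1 : listLe (· < ·) u v)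
    (h2 : listLe (· < ·) v w) : listLe (· < ·) u w := by
  rcases h1 with rfl | h1
  · exact h2
  rcases h2 with rfl | h2
  · exact Or.inr h1
  · exact Or.inr (List.lex_trans (fun a b => lt_trans a b) h1 h2)

private lemma listLe_antisymm_s5 {u v : List Bool} (h1 : listLe (· < ·) u v)
    (h2 : listLe (· < ·) v u) : u = v := by
  rcases h1 with rfl | h1
  · rfl
  rcases h2 with rfl | h2
  · rfl
  · exact absurd h2 (asymm h1)

private lemma listLe_total (u v : List Bool) : listLe (· < ·) u v ∨ listLe (· < ·) v u := by
  rcases trichotomous_of (List.Lex ((· < ·) : Bool → Bool → Prop)) u v with h | h | h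
  · exact Or.inl (Or.inr h)
  · exact Or.inl (Or.inl h)
  · exact Or.inr (Or.inr h)

private lemma exists_min_list {S : List Bool → List Bool → Prop}
    (hrefl : ∀ u, S u u) (htot : ∀ u v, S u v ∨ S v u)
    (htrans : ∀ {u v w}, S u v → S v w → S u w) :
    ∀ L : List (List Bool), L ≠ [] → ∃ m ∈ L, ∀ u ∈ L, S m u := by
  intro L
  induction L with
  | nil => simp
  | cons x xs ih =>
    intro _
    rcases eq_or_ne xs [] with rfl | hxs
    · exact ⟨x, by simp, by simpa using hrefl x⟩
    · obtain ⟨m, hm, hall⟩ := ih hxs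
      rcases htot m x with h | h
      · refine ⟨m, by simp [hm], ?_⟩
        intro u hu
        rcases List.mem_cons.mp hu with rfl | hu
        · exact h
        · exact hall u hu
      · refine ⟨x, by simp, ?_⟩
        intro u hu
        rcases List.mem_cons.mp hu with rfl | hu
        · exact hrefl u
        · exact htrans h (hall u hu)

private lemma infix_decomp {u w : List Bool} (h : u <:+: w) :
    ∃ i, i + u.length ≤ w.length ∧ u = (w.drop i).take u.length := by
  obtain ⟨s, t, rfl⟩ := h
  refine ⟨s.length, by simp, ?_⟩
  rw [List.append_assoc, List.drop_left]
  rw [List.take_left]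

private lemma take_drop_infix (w : List Bool) (i k : ℕ) : (w.drop i).take k <:+: w :=
  ((List.take_prefix k _).isInfix).trans (List.drop_suffix i w).isInfix

private lemma lex_decomp : ∀ {u v : List Bool}, List.Lex (· < ·) u v → u.length = v.length →
    ∃ p u' v', u = p ++ false :: u' ∧ v = p ++ true :: v' := by
  intro u v h
  induction h with
  | nil => intro h; simp at h
  | @cons a l1 l2 h ih =>
    intro hl
    obtain ⟨p, u', v', h1, h2⟩ := ih (by simpa using hl)
    exact ⟨a :: p, u', v', by simp [h1], by simp [h2]⟩
  | @rel a l1 b l2 hab =>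
    intro _
    rcases bool_lt_iff.mp hab with ⟨rfl, rfl⟩
    exact ⟨[], l1, l2, rfl, rfl⟩

private lemma ne_decomp : ∀ {u v : List Bool}, u.length = v.length → u ≠ v →
    ∃ p x y u' v', u = p ++ x :: u' ∧ v = p ++ y :: v' ∧ x ≠ y ∧ u'.length = v'.length := by
  intro u
  induction u with
  | nil =>
    intro v h hne
    cases v with
    | nil => exact absurd rfl hne
    | cons b v => simp at h
  | cons a u ih =>
    intro v h hne
    cases v with
    | nil => simp at h
    | cons b v =>
      by_cases hab : a = b
      · subst hab
        have huv : u ≠ v := by rintro rfl; exact hne rfl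
        obtain ⟨p, x, y, u', v', h1, h2, h3, h4⟩ := ih (by simpa using h) huv
        exact ⟨a :: p, x, y, u', v', by simp [h1], by simp [h2], h3, h4⟩
      · exact ⟨[], a, b, u, v, rfl, rfl, hab, by simpa using h⟩

private def cands (w : List Bool) (k : ℕ) : List (List Bool) :=
  (((List.range (w.length + 1)).map fun i => (w.drop i).take k).filter fun u => u.length = k)

private lemma mem_cands {w : List Bool} {k : ℕ} {u : List Bool} :
    u ∈ cands w k ↔ u <:+: w ∧ u.length = k := by
  constructor
  · intro hu
    rw [cands, List.mem_filter] at hu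
    obtain ⟨hu1, hu2⟩ := hu
    simp only [List.mem_map, List.mem_range] at hu1
    obtain ⟨i, _, rfl⟩ := hu1
    exact ⟨take_drop_infix w i k, by simpa using hu2⟩
  · rintro ⟨h, rfl⟩
    obtain ⟨i, hi, hu⟩ := infix_decomp h
    rw [cands, List.mem_filter]
    constructor
    · simp only [List.mem_map, List.mem_range]
      exact ⟨i, by omega, hu.symm⟩
    · simp

private lemma cands_ne_nil {w : List Bool} {k : ℕ} (hk : k ≤ w.length) :
    cands w k ≠ [] := by
  have : w.take k ∈ cands w k := by
    rw [mem_cands]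
    exact ⟨(List.take_prefix k w).isInfix, by simpa using hk⟩
  exact List.ne_nil_of_mem this

private lemma exists_isMinFacLen {w : List Bool} {k : ℕ} (hk : k ≤ w.length) :
    ∃ m, IsMinFacLen (· < ·) w k m := by
  obtain ⟨m, hm, hall⟩ := exists_min_list listLe_refl_s5 listLe_total
    (fun h1 h2 => listLe_trans h1 h2) (cands w k) (cands_ne_nil hk)
  rw [mem_cands] at hm
  exact ⟨m, hm.1, hm.2, fun u hu hul => hall u (mem_cands.mpr ⟨hu, hul⟩)⟩

private lemma exists_isMaxFacLen {w : List Bool} {k : ℕ} (hk : k ≤ w.length) :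
    ∃ m, IsMaxFacLen (· < ·) w k m := by
  obtain ⟨m, hm, hall⟩ := exists_min_list (S := fun u v => listLe (· < ·) v u) listLe_refl_s5
    (fun u v => (listLe_total v u)) (fun h1 h2 => listLe_trans h2 h1) (cands w k) (cands_ne_nil hk)
  rw [mem_cands] at hm
  exact ⟨m, hm.1, hm.2, fun u hu hul => hall u (mem_cands.mpr ⟨hu, hul⟩)⟩

private lemma isMinFacLen_unique_s5 {w m m' : List Bool} {k : ℕ}
    (h : IsMinFacLen (· < ·) w k m) (h' : IsMinFacLen (· < ·) w k m') : m = m' :=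
  listLe_antisymm_s5 (h.2.2 m' h'.1 h'.2.1) (h'.2.2 m h.1 h.2.1)

private lemma isMaxFacLen_unique {w m m' : List Bool} {k : ℕ}
    (h : IsMaxFacLen (· < ·) w k m) (h' : IsMaxFacLen (· < ·) w k m') : m = m' :=
  listLe_antisymm_s5 (h'.2.2 m h.1 h.2.1) (h.2.2 m' h'.1 h'.2.1)


private lemma extract {w : List Bool} :
    ∀ k : ℕ, ∀ u v : List Bool, u <:+: w → v <:+: w → u.length = k → v.length = k →
      v.count true + 2 ≤ u.count true →
      ∃ s : List Bool, s.length + 2 ≤ k ∧ (false :: s ++ [false]) <:+: w ∧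
        (true :: s ++ [true]) <:+: w := by
  intro k
  induction k using Nat.strong_induction_on with
  | _ k ih =>
  intro u v hu hv hul hvl hc
  have hk2 : 2 ≤ k := by
    have h1 := List.count_le_length (l := u) (a := true)
    omega
  obtain ⟨x, u1, rfl⟩ : ∃ x u1, u = x :: u1 := by
    cases u with
    | nil => simp at hul; omega
    | cons a b => exact ⟨a, b, rfl⟩
  obtain ⟨y, v1, rfl⟩ : ∃ y v1, v = y :: v1 := by
    cases v with
    | nil => simp at hvl; omega
    | cons a b => exact ⟨a, b, rfl⟩
  by_cases hx : x = true ∧ y = false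
  case neg =>
    have hu1 : u1 <:+: w := (List.suffix_cons x u1).isInfix.trans hu
    have hv1 : v1 <:+: w := (List.suffix_cons y v1).isInfix.trans hv
    have hcc : v1.count true + 2 ≤ u1.count true := by
      simp only [List.count_cons] at hc
      cases x <;> cases y <;> simp_all <;> omega
    obtain ⟨s, hs, h1, h2⟩ := ih (k - 1) (by omega) u1 v1 hu1 hv1
      (by simp at hul; omega) (by simp at hvl; omega) hcc
    exact ⟨s, by omega, h1, h2⟩
  case pos =>
  obtain ⟨rfl, rfl⟩ := hx
  obtain ⟨u2, x', rfl⟩ : ∃ u2 x', u1 = u2 ++ [x'] := by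
    rcases List.eq_nil_or_concat u1 with h | ⟨a, b, h⟩
    · subst h; simp at hul; omega
    · exact ⟨a, b, by simpa [List.concat_eq_append] using h⟩
  obtain ⟨v2, y', rfl⟩ : ∃ v2 y', v1 = v2 ++ [y'] := by
    rcases List.eq_nil_or_concat v1 with h | ⟨a, b, h⟩
    · subst h; simp at hvl; omega
    · exact ⟨a, b, by simpa [List.concat_eq_append] using h⟩
  have hu2l : u2.length = k - 2 := by simp at hul; omega
  have hv2l : v2.length = k - 2 := by simp at hvl; omega
  by_cases hx' : x' = true ∧ y' = false
  case neg =>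
    have hu1 : (true :: u2) <:+: w :=
      ((List.prefix_append (true :: u2) [x']).isInfix).trans hu
    have hv1 : (false :: v2) <:+: w :=
      ((List.prefix_append (false :: v2) [y']).isInfix).trans hv
    have hcc : (false :: v2).count true + 2 ≤ (true :: u2).count true := by
      simp only [List.count_cons, List.count_append] at hc ⊢
      cases x' <;> cases y' <;> simp_all <;> omega
    obtain ⟨s, hs, h1, h2⟩ := ih (k - 1) (by omega) (true :: u2) (false :: v2) hu1 hv1
      (by simp; omega) (by simp; omega) hcc
    exact ⟨s, by omega, h1, h2⟩
  case pos =>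
  obtain ⟨rfl, rfl⟩ := hx'
  by_cases h22 : u2 = v2
  · subst h22
    exact ⟨u2, by omega, hv, hu⟩
  · obtain ⟨p, c, d, q1, q2, hdu, hdv, hcd, hql⟩ := ne_decomp (by omega) h22
    have hpl : p.length + 1 + q1.length = k - 2 := by
      subst hdu; simp at hu2l; omega
    cases c
    · -- c = false, d = true : recurse on suffixes
      have hd : d = true := by
        cases d with
        | false => exact absurd rfl hcd
        | true => rfl
      subst hd; subst hdu; subst hdv
      have hq1 : (q1 ++ [true]) <:+: w := by
        refine (List.IsSuffix.isInfix ?_).trans hu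
        refine ⟨true :: p ++ [false], by simp⟩
      have hq2 : (q2 ++ [false]) <:+: w := by
        refine (List.IsSuffix.isInfix ?_).trans hv
        refine ⟨false :: p ++ [true], by simp⟩
      have hcc : (q2 ++ [false]).count true + 2 ≤ (q1 ++ [true]).count true := by
        simp only [List.count_cons, List.count_append] at hc ⊢
        simp_all
      obtain ⟨s, hs, h1, h2⟩ := ih (q1.length + 1) (by omega) _ _ hq1 hq2
        (by simp) (by simp; omega) hcc
      exact ⟨s, by omega, h1, h2⟩
    · -- c = true, d = false : direct
      have hd : d = false := by
        cases d with
        | false => rfl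
        | true => exact absurd rfl hcd
      subst hd; subst hdu; subst hdv
      refine ⟨p, by omega, ?_, ?_⟩
      · refine (List.IsPrefix.isInfix ?_).trans hv
        refine ⟨q2 ++ [false], by simp⟩
      · refine (List.IsPrefix.isInfix ?_).trans hu
        refine ⟨q1 ++ [true], by simp⟩

private lemma exists_min_s {w : List Bool}
    (h : ∃ s : List Bool, (false :: s ++ [false]) <:+: w ∧ (true :: s ++ [true]) <:+: w) :
    ∃ s : List Bool, (false :: s ++ [false]) <:+: w ∧ (true :: s ++ [true]) <:+: w ∧
      ∀ u v : List Bool, u <:+: w → v <:+: w → u.length = v.length →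
        u.length ≤ s.length + 1 → u.count true ≤ v.count true + 1 := by
  classical
  have hex : ∃ n, ∃ s : List Bool, s.length = n ∧
      (false :: s ++ [false]) <:+: w ∧ (true :: s ++ [true]) <:+: w := by
    obtain ⟨s, h1, h2⟩ := h
    exact ⟨s.length, s, rfl, h1, h2⟩
  obtain ⟨s, hsl, h1, h2⟩ := Nat.find_spec hex
  refine ⟨s, h1, h2, ?_⟩
  intro u v hu hv hlen hle
  by_contra hgt
  push_neg at hgt
  obtain ⟨s', hs', h1', h2'⟩ := extract u.length u v hu hv rfl hlen.symm (by omega)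
  have hlt : s'.length < Nat.find hex := by omega
  exact Nat.find_min hex hlt ⟨s', rfl, h1', h2'⟩

private lemma minFac_eq {w s : List Bool}
    (ha : (false :: s ++ [false]) <:+: w) (hb : (true :: s ++ [true]) <:+: w)
    (bal : ∀ u v : List Bool, u <:+: w → v <:+: w → u.length = v.length →
      u.length ≤ s.length + 1 → u.count true ≤ v.count true + 1) :
    ∀ j, j ≤ s.length + 2 → IsMinFacLen (· < ·) w j ((false :: s ++ [false]).take j) := by
  intro j hj
  set q : List Bool := false :: s ++ [false] with hqdef
  have hql : q.length = s.length + 2 := by simp [hqdef]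
  have hinf : q.take j <:+: w := (List.take_prefix j q).isInfix.trans ha
  have htl : (q.take j).length = j := by simp [hql]; omega
  refine ⟨hinf, htl, ?_⟩
  intro z hz hzl
  rcases listLe_total (q.take j) z with h | h
  · exact h
  rcases h with heq | hlex
  · exact Or.inl heq.symm
  exfalso
  obtain ⟨p, z', q', hzd, hqd⟩ := lex_decomp hlex (by omega)
  have hpq : (p ++ [true]) <+: q := by
    have hx : (p ++ [true]) <+: q.take j := by
      rw [hqd]; exact ⟨q', by simp⟩
    exact hx.trans (List.take_prefix j q)
  have hplen : p.length + 1 ≤ j := by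
    have := congrArg List.length hqd
    simp [htl] at this; omega
  have hps : p.length ≤ s.length := by
    by_contra hgt
    push_neg at hgt
    have hfull : p.length + 1 = q.length := by
      have := hpq.length_le; simp at this; omega
    obtain ⟨t, ht⟩ := hpq
    have htnil : t = [] := by
      have hlen := congrArg List.length ht
      simp at hlen
      exact List.eq_nil_of_length_eq_zero (by omega)
    rw [htnil, List.append_nil] at ht
    have h3 : ((false :: s) ++ [false] : List Bool) = p ++ [true] := by
      rw [ht]
    have h4 : ([false] : List Bool) = [true] := by
      refine (List.append_inj h3 ?_).2
      simp; omega
    simp at h4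
  have h5 : p ++ [true] = q.take (p.length + 1) := by
    have := List.prefix_iff_eq_take.mp hpq
    simpa using this
  have h6 : q.take (p.length + 1) = false :: s.take p.length := by
    rw [hqdef]
    show (false :: (s ++ [false])).take (p.length + 1) = _
    simp [List.take_append_of_le_length hps]
  have h7 : p.count true + 1 = (s.take p.length).count true := by
    have := congrArg (List.count true) (h5.trans h6)
    simpa using this
  -- the violating pair
  have hy : (true :: s.take p.length) <:+: w := by
    have hyp : (true :: s.take p.length) <+: (true :: s ++ [true]) := by
      show _ <+: (true :: (s ++ [true]))
      refine List.cons_prefix_cons.mpr ⟨rfl, ?_⟩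
      exact ((List.take_prefix p.length s).trans (List.prefix_append s [true]))
    exact hyp.isInfix.trans hb
  have hz1 : (p ++ [false]) <:+: w := by
    have : (p ++ [false]) <+: z := by rw [hzd]; exact ⟨z', by simp⟩
    exact this.isInfix.trans hz
  have hlen1 : (true :: s.take p.length).length = (p ++ [false]).length := by
    simp <;> omega
  have hlen2 : (true :: s.take p.length).length ≤ s.length + 1 := by
    simp <;> omega
  have := bal _ _ hy hz1 hlen1 hlen2
  simp [List.count_cons, List.count_append] at this
  omega

private lemma maxFac_eq {w s : List Bool}
    (ha : (false :: s ++ [false]) <:+: w) (hb : (true :: s ++ [true]) <:+: w)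
    (bal : ∀ u v : List Bool, u <:+: w → v <:+: w → u.length = v.length →
      u.length ≤ s.length + 1 → u.count true ≤ v.count true + 1) :
    ∀ j, j ≤ s.length + 2 → IsMaxFacLen (· < ·) w j ((true :: s ++ [true]).take j) := by
  intro j hj
  set q : List Bool := true :: s ++ [true] with hqdef
  have hql : q.length = s.length + 2 := by simp [hqdef]
  have hinf : q.take j <:+: w := (List.take_prefix j q).isInfix.trans hb
  have htl : (q.take j).length = j := by simp [hql]; omega
  refine ⟨hinf, htl, ?_⟩
  intro z hz hzl
  rcases listLe_total z (q.take j) with h | h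
  · exact h
  rcases h with heq | hlex
  · exact Or.inl heq.symm
  exfalso
  obtain ⟨p, q', z', hqd, hzd⟩ := lex_decomp hlex (by omega)
  have hpq : (p ++ [false]) <+: q := by
    have hx : (p ++ [false]) <+: q.take j := by
      rw [hqd]; exact ⟨q', by simp⟩
    exact hx.trans (List.take_prefix j q)
  have hplen : p.length + 1 ≤ j := by
    have := congrArg List.length hqd
    simp [htl] at this; omega
  have hps : p.length ≤ s.length := by
    by_contra hgt
    push_neg at hgt
    have hfull : p.length + 1 = q.length := by
      have := hpq.length_le; simp at this; omega
    obtain ⟨t, ht⟩ := hpq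
    have htnil : t = [] := by
      have hlen := congrArg List.length ht
      simp at hlen
      exact List.eq_nil_of_length_eq_zero (by omega)
    rw [htnil, List.append_nil] at ht
    have h3 : ((true :: s) ++ [true] : List Bool) = p ++ [false] := by
      rw [ht]
    have h4 : ([true] : List Bool) = [false] := by
      refine (List.append_inj h3 ?_).2
      simp; omega
    simp at h4
  have h5 : p ++ [false] = q.take (p.length + 1) := by
    have := List.prefix_iff_eq_take.mp hpq
    simpa using this
  have h6 : q.take (p.length + 1) = true :: s.take p.length := by
    rw [hqdef]
    show (true :: (s ++ [true])).take (p.length + 1) = _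
    simp [List.take_append_of_le_length hps]
  have h7 : p.count true = (s.take p.length).count true + 1 := by
    have := congrArg (List.count true) (h5.trans h6)
    simpa using this
  have hy : (false :: s.take p.length) <:+: w := by
    have hyp : (false :: s.take p.length) <+: (false :: s ++ [false]) := by
      show _ <+: (false :: (s ++ [false]))
      refine List.cons_prefix_cons.mpr ⟨rfl, ?_⟩
      exact ((List.take_prefix p.length s).trans (List.prefix_append s [false]))
    exact hyp.isInfix.trans ha
  have hz1 : (p ++ [true]) <:+: w := by
    have : (p ++ [true]) <+: z := by rw [hzd]; exact ⟨z', by simp⟩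
    exact this.isInfix.trans hz
  have hlen1 : (p ++ [true]).length = (false :: s.take p.length).length := by
    simp <;> omega
  have hlen2 : (p ++ [true]).length ≤ s.length + 1 := by
    simp <;> omega
  have := bal _ _ hz1 hy hlen1 hlen2
  simp [List.count_cons, List.count_append] at this
  omega

private lemma take_eq_of_prefix {m m' : List Bool} (h : m <+: m') {j : ℕ} (hj : j ≤ m.length) :
    m'.take j = m.take j := by
  have h1 : m.take j <+: m' := (List.take_prefix j m).trans h
  have h2 := List.prefix_iff_eq_take.mp h1
  rw [List.length_take, min_eq_left hj] at h2
  exact h2.symm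

private lemma exists_isMinFin {w q : List Bool} (hq : q <:+: w) (hq0 : q ≠ [])
    (hmin : ∀ j, j ≤ q.length → IsMinFacLen (· < ·) w j (q.take j)) :
    ∃ m, IsMinFin (· < ·) w m ∧ q <+: m := by
  classical
  set P : ℕ → Prop := fun l => ∃ c : List Bool, c.length = l ∧ c <:+: w ∧
    ∀ j, j ≤ l → IsMinFacLen (· < ·) w j (c.take j) with hPdef
  have hPq : P q.length := ⟨q, rfl, hq, hmin⟩
  have hqw : q.length ≤ w.length := hq.length_le
  have hql : q.length ≤ Nat.findGreatest P w.length := Nat.le_findGreatest hqw hPq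
  obtain ⟨m, hml, hmw, hmj⟩ := Nat.findGreatest_spec hqw hPq
  refine ⟨m, ⟨?_, ?_, ?_⟩, ?_⟩
  · intro hnil
    rw [hnil] at hml
    simp at hml
    exact hq0 (List.eq_nil_of_length_eq_zero (by omega))
  · intro j hj
    exact hmj j (by omega)
  · intro m' hm' hpre
    have hl' : m'.length = m.length + 1 := hm'.2.1
    have hle : m.length + 1 ≤ w.length := by
      have := hm'.1.length_le; omega
    have hgt : Nat.findGreatest P w.length < m.length + 1 := by omega
    refine Nat.findGreatest_is_greatest hgt hle ?_
    refine ⟨m', by omega, hm'.1, ?_⟩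
    intro j hj
    rcases Nat.lt_or_ge j (m.length + 1) with hlt | hge
    · rw [take_eq_of_prefix hpre (by omega)]
      exact hmj j (by omega)
    · have hjeq : j = m.length + 1 := by omega
      subst hjeq
      have htk : m'.take (m.length + 1) = m' := by
        rw [← hl']; exact List.take_length (l := m')
      rw [htk]
      exact hm'
  · -- q <+: m
    have h1 : IsMinFacLen (· < ·) w q.length (m.take q.length) := hmj q.length (by omega)
    have h2 : IsMinFacLen (· < ·) w q.length q := by
      have := hmin q.length le_rfl
      rwa [List.take_length] at this
    have h3 : q = m.take q.length := isMinFacLen_unique_s5 h2 h1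
    rw [h3]
    exact List.take_prefix _ _

private lemma exists_isMaxFin {w q : List Bool} (hq : q <:+: w) (hq0 : q ≠ [])
    (hmin : ∀ j, j ≤ q.length → IsMaxFacLen (· < ·) w j (q.take j)) :
    ∃ m, IsMaxFin (· < ·) w m ∧ q <+: m := by
  classical
  set P : ℕ → Prop := fun l => ∃ c : List Bool, c.length = l ∧ c <:+: w ∧
    ∀ j, j ≤ l → IsMaxFacLen (· < ·) w j (c.take j) with hPdef
  have hPq : P q.length := ⟨q, rfl, hq, hmin⟩
  have hqw : q.length ≤ w.length := hq.length_le
  have hql : q.length ≤ Nat.findGreatest P w.length := Nat.le_findGreatest hqw hPq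
  obtain ⟨m, hml, hmw, hmj⟩ := Nat.findGreatest_spec hqw hPq
  refine ⟨m, ⟨?_, ?_, ?_⟩, ?_⟩
  · intro hnil
    rw [hnil] at hml
    simp at hml
    exact hq0 (List.eq_nil_of_length_eq_zero (by omega))
  · intro j hj
    exact hmj j (by omega)
  · intro m' hm' hpre
    have hl' : m'.length = m.length + 1 := hm'.2.1
    have hle : m.length + 1 ≤ w.length := by
      have := hm'.1.length_le; omega
    have hgt : Nat.findGreatest P w.length < m.length + 1 := by omega
    refine Nat.findGreatest_is_greatest hgt hle ?_
    refine ⟨m', by omega, hm'.1, ?_⟩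
    intro j hj
    rcases Nat.lt_or_ge j (m.length + 1) with hlt | hge
    · rw [take_eq_of_prefix hpre (by omega)]
      exact hmj j (by omega)
    · have hjeq : j = m.length + 1 := by omega
      subst hjeq
      have htk : m'.take (m.length + 1) = m' := by
        rw [← hl']; exact List.take_length (l := m')
      rw [htk]
      exact hm'
  · have h1 : IsMaxFacLen (· < ·) w q.length (m.take q.length) := hmj q.length (by omega)
    have h2 : IsMaxFacLen (· < ·) w q.length q := by
      have := hmin q.length le_rfl
      rwa [List.take_length] at this
    have h3 : q = m.take q.length := isMaxFacLen_unique h2 h1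
    rw [h3]
    exact List.take_prefix _ _

end NBIPAux

/-- A finite binary word `w` (with `a = false < b = true`) is not balanced
iff there is a finite word `u` such that `aua` is a prefix of `min(w)` and `bub` is a
prefix of `max(w)`. -/
theorem not_balanced_iff_prefix {w : List Bool} :
    ¬ BalancedList w ↔
      ∃ u m M : List Bool, IsMinFin (· < ·) w m ∧ IsMaxFin (· < ·) w M ∧
        (false :: u ++ [false]) <+: m ∧ (true :: u ++ [true]) <+: M := by
  constructor
  · intro hnb
    rw [BalancedList] at hnb
    push_neg at hnb
    obtain ⟨u, v, hu, hv, hlen, hgt⟩ := hnb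
    have hcases : v.count true + 2 ≤ u.count true ∨ u.count true + 2 ≤ v.count true := by
      rcases abs_cases ((u.count true : ℤ) - v.count true) with ⟨heq, _⟩ | ⟨heq, _⟩ <;>
        rw [heq] at hgt <;> omega
    have hex : ∃ s : List Bool, (false :: s ++ [false]) <:+: w ∧
        (true :: s ++ [true]) <:+: w := by
      rcases hcases with h | h
      · obtain ⟨s, _, h1, h2⟩ := extract u.length u v hu hv rfl hlen.symm h
        exact ⟨s, h1, h2⟩
      · obtain ⟨s, _, h1, h2⟩ := extract v.length v u hv hu rfl hlen h
        exact ⟨s, h1, h2⟩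
    obtain ⟨s, ha, hb, bal⟩ := exists_min_s hex
    have hminfac := minFac_eq ha hb bal
    have hmaxfac := maxFac_eq ha hb bal
    have hqalen : (false :: s ++ [false] : List Bool).length = s.length + 2 := by simp
    have hqblen : (true :: s ++ [true] : List Bool).length = s.length + 2 := by simp
    obtain ⟨m, hm, hqm⟩ := exists_isMinFin ha (by simp)
      (fun j hj => hminfac j (by omega))
    obtain ⟨M, hM, hqM⟩ := exists_isMaxFin hb (by simp)
      (fun j hj => hmaxfac j (by omega))
    exact ⟨s, m, M, hm, hM, hqm, hqM⟩
  · rintro ⟨u, m, M, hm, hM, hpm, hpM⟩ hbal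
    have hql : (false :: u ++ [false] : List Bool).length = u.length + 2 := by simp
    have hQl : (true :: u ++ [true] : List Bool).length = u.length + 2 := by simp
    have h1 : (false :: u ++ [false]) <:+: w := by
      have h3 : (false :: u ++ [false] : List Bool) =
          m.take (false :: u ++ [false] : List Bool).length :=
        List.prefix_iff_eq_take.mp hpm
      have h2 := hm.2.1 _ hpm.length_le
      rw [← h3] at h2
      exact h2.1
    have h2 : (true :: u ++ [true]) <:+: w := by
      have h3 : (true :: u ++ [true] : List Bool) =
          M.take (true :: u ++ [true] : List Bool).length :=
        List.prefix_iff_eq_take.mp hpM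
      have h2 := hM.2.1 _ hpM.length_le
      rw [← h3] at h2
      exact h2.1
    have := hbal _ _ h1 h2 (by omega)
    rw [abs_le] at this
    simp [List.count_cons, List.count_append] at this
end
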